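/- Let A = {0,1}, let k be a positive even integer, and let n ≥ k+1. Define, for i ∈ [0, 2^{n−1}−1], γ^{n,k}_{[i]} = θ^i(0)·γ^{n−1,k−1}_{[i]} and γ̄^{n,k}_{[i]} = θ^i(1)·γ^{n−1,k−1}_{[i]}, where γ^{n−1,k−1} is the σ_{k−1}-Gray cycle over {0,1}^{n−1} built for the odd integer k−1. Then γ^{n,k} is a σ_k-Gray cycle over Even_1^n and γ̄^{n,k} is a σ_k-Gray cycle over Odd_1^n; in particular each has length 2^{n−1}. -/

import Mathlib

/-- Hamming distance between two words (lists) of the same length: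
the number of positions in which they differ. -/
def hammingL {α : Type*} [DecidableEq α] (w w' : List α) : ℕ :=
  ((w.zip w').filter fun q => decide (q.1 ≠ q.2)).length

/-- `w` (restricted to indices `< N`) is a `σ_k`-Gray cycle over `X`:
its terms are pairwise distinct and enumerate `X` (a bijection from `[0, N-1]` onto `X`),
two consecutive terms have the same length and Hamming distance exactly `k`, and so do
the first and the last term. -/
def IsGrayCycleOn {α : Type*} [DecidableEq α] (k N : ℕ) (w : ℕ → List α)
    (X : Set (List α)) : Prop :=
  Set.BijOn w (Set.Iio N) X ∧
  (∀ i, 1 ≤ i → i < N →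
    (w (i - 1)).length = (w i).length ∧ hammingL (w (i - 1)) (w i) = k) ∧
  (0 < N → (w (N - 1)).length = (w 0).length ∧ hammingL (w (N - 1)) (w 0) = k)

/-- The bit complement `θ : 0 ↔ 1` on the binary alphabet `{0,1}`. -/
def cpl (x : Fin 2) : Fin 2 := x + 1

/-- The bit complement extended letterwise to binary words. -/
def cplW (w : List (Fin 2)) : List (Fin 2) := w.map cpl

/-- The reflected binary Gray code `g^{m,1}` over words of length `m`:
`g^{0,1} = (ε)` and `g^{m+1,1} = (0·g^{m,1}, 1·(g^{m,1})^R)`. -/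
def binGray : ℕ → List (List (Fin 2))
  | 0 => [[]]
  | m + 1 =>
      (binGray m).map (fun w => 0 :: w) ++ (binGray m).reverse.map (fun w => 1 :: w)

/-- The sequence `γ^{n0,1}`: `γ^{n0,1}_{[0]} = g^{n0,1}_{[0]}` and
`γ^{n0,1}_{[i]} = g^{n0,1}_{[2^{n0} - i]}` for `1 ≤ i ≤ 2^{n0} - 1`. -/
def gamma1 (n0 i : ℕ) : List (Fin 2) :=
  if i = 0 then (binGray n0).getD 0 [] else (binGray n0).getD (2 ^ n0 - i) []

/-- The sequence `ρ^{n0,1}`: `ρ^{n0,1}_{[0]} = g^{n0,1}_{[2^{n0}-1]}` and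
`ρ^{n0,1}_{[i]} = g^{n0,1}_{[i-1]}` for `1 ≤ i ≤ 2^{n0} - 1`. -/
def rho1 (n0 i : ℕ) : List (Fin 2) :=
  if i = 0 then (binGray n0).getD (2 ^ n0 - 1) [] else (binGray n0).getD (i - 1) []

/-- `grSeq n0 true t i` (resp. `grSeq n0 false t i`) is the term of index `i` of the
sequence `γ^{n0+2t, 2t+1}` (resp. `ρ^{n0+2t, 2t+1}`), built inductively: the base cases
are `γ^{n0,1}` and `ρ^{n0,1}`, and, writing `i = q·2^m + r` with `m = n0 + 2t` and
`r < 2^m`, `γ^{m+2, (2t+1)+2}_{[i]}` is `θ^r(00)·γ^{m,2t+1}_{[r]}`, `θ^r(01)·ρ^{m,2t+1}_{[r]}`,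
`θ^r(11)·γ^{m,2t+1}_{[r]}`, `θ^r(10)·ρ^{m,2t+1}_{[r]}` according to `q = 0, 1, 2, 3`, and
`ρ^{m+2, (2t+1)+2}_{[i]}` is `θ^r(10)·γ^{m,2t+1}_{[r]}`, `θ^r(11)·ρ^{m,2t+1}_{[r]}`,
`θ^r(01)·γ^{m,2t+1}_{[r]}`, `θ^r(00)·ρ^{m,2t+1}_{[r]}` according to `q = 0, 1, 2, 3`. -/
def grSeq (n0 : ℕ) : Bool → ℕ → ℕ → List (Fin 2)
  | b, 0, i => if b then gamma1 n0 i else rho1 n0 i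
  | b, t + 1, i =>
      cplW^[i % 2 ^ (n0 + 2 * t)]
        (if b then
          (if i / 2 ^ (n0 + 2 * t) = 0 then [0, 0]
           else if i / 2 ^ (n0 + 2 * t) = 1 then [0, 1]
           else if i / 2 ^ (n0 + 2 * t) = 2 then [1, 1] else [1, 0])
         else
          (if i / 2 ^ (n0 + 2 * t) = 0 then [1, 0]
           else if i / 2 ^ (n0 + 2 * t) = 1 then [1, 1]
           else if i / 2 ^ (n0 + 2 * t) = 2 then [0, 1] else [0, 0])) ++
        grSeq n0 (i / 2 ^ (n0 + 2 * t) % 2 == 0) t (i % 2 ^ (n0 + 2 * t))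

/-- For odd `k` and `n ≥ k + 1`, `gammaNK n k i` is the term `γ^{n,k}_{[i]}`
(here `n0 = n - k + 1` and `k = 2·(k/2) + 1`). -/
def gammaNK (n k i : ℕ) : List (Fin 2) := grSeq (n + 1 - k) true (k / 2) i

/-- For odd `k` and `n ≥ k + 1`, `rhoNK n k i` is the term `ρ^{n,k}_{[i]}`. -/
def rhoNK (n k i : ℕ) : List (Fin 2) := grSeq (n + 1 - k) false (k / 2) i


/-! ### Auxiliary development -/

lemma hammingL_cons {α : Type*} [DecidableEq α] (a b : α) (w w' : List α) :
    hammingL (a :: w) (b :: w') = (if a = b then 0 else 1) + hammingL w w' := by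
  simp only [hammingL, List.zip_cons_cons, List.filter]
  by_cases h : a = b <;> simp [h, List.zip] <;> omega

lemma hammingL_self {α : Type*} [DecidableEq α] (w : List α) : hammingL w w = 0 := by
  induction w with
  | nil => rfl
  | cons a w ih => rw [hammingL_cons]; simp [ih]

lemma hammingL_comm {α : Type*} [DecidableEq α] (w w' : List α) :
    hammingL w w' = hammingL w' w := by
  induction w generalizing w' with
  | nil => cases w' <;> rfl
  | cons a w ih =>
    cases w' with
    | nil => rfl
    | cons b w' =>
      rw [hammingL_cons, hammingL_cons, ih]
      by_cases h : a = b <;> simp [h, Ne.symm, eq_comm]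

lemma hammingL_append {α : Type*} [DecidableEq α] (x y w w' : List α)
    (h : x.length = y.length) :
    hammingL (x ++ w) (y ++ w') = hammingL x y + hammingL w w' := by
  induction x generalizing y with
  | nil => cases y with
    | nil => simp [hammingL]
    | cons b ys => simp at h
  | cons a xs ih =>
    cases y with
    | nil => simp at h
    | cons b ys =>
      simp only [List.cons_append, hammingL_cons]
      rw [ih ys (by simpa using h)]
      ring

lemma cpl_ne (x : Fin 2) : cpl x ≠ x := by fin_cases x <;> decide

lemma cpl_cpl (x : Fin 2) : cpl (cpl x) = x := by fin_cases x <;> decide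

lemma cpl_iterate (i : ℕ) (x : Fin 2) : cpl^[i] x = if i % 2 = 0 then x else cpl x := by
  induction i with
  | zero => simp
  | succ i ih =>
    rw [Function.iterate_succ_apply', ih]
    rcases Nat.even_or_odd i with h | h
    · have h1 : i % 2 = 0 := Nat.even_iff.mp h
      have h2 : (i+1) % 2 = 1 := by omega
      simp [h1, h2]
    · have h1 : i % 2 = 1 := Nat.odd_iff.mp h
      have h2 : (i+1) % 2 = 0 := by omega
      simp [h1, h2, cpl_cpl]

lemma cplW_length (w : List (Fin 2)) : (cplW w).length = w.length := by simp [cplW]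

lemma cplW_cplW (w : List (Fin 2)) : cplW (cplW w) = w := by
  have h : cpl ∘ cpl = id := funext cpl_cpl
  simp [cplW, List.map_map, h]

lemma cplW_iterate (i : ℕ) (w : List (Fin 2)) :
    cplW^[i] w = if i % 2 = 0 then w else cplW w := by
  induction i with
  | zero => simp
  | succ i ih =>
    rw [Function.iterate_succ_apply', ih]
    rcases Nat.even_or_odd i with h | h
    · have h1 : i % 2 = 0 := Nat.even_iff.mp h
      have h2 : (i+1) % 2 = 1 := by omega
      simp [h1, h2]
    · have h1 : i % 2 = 1 := Nat.odd_iff.mp h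
      have h2 : (i+1) % 2 = 0 := by omega
      simp [h1, h2, cplW_cplW]

lemma cplW_iter_length (r : ℕ) (w : List (Fin 2)) : (cplW^[r] w).length = w.length := by
  rw [cplW_iterate]; split <;> simp [cplW_length]

lemma hammingL_cplW_right (w : List (Fin 2)) : hammingL w (cplW w) = w.length := by
  induction w with
  | nil => rfl
  | cons a w ih =>
    simp only [cplW, List.map_cons, hammingL_cons]
    rw [if_neg (Ne.symm (cpl_ne a))]
    simp [cplW] at ih
    simp [ih]
    omega

lemma cplW_inj : Function.Injective cplW := by
  intro a b h
  have := congrArg cplW h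
  rwa [cplW_cplW, cplW_cplW] at this

lemma count_parity (w w' : List (Fin 2)) (h : w.length = w'.length) :
    (w.count 1 + hammingL w w') % 2 = w'.count 1 % 2 := by
  induction w generalizing w' with
  | nil => cases w' with
    | nil => rfl
    | cons b ys => simp at h
  | cons a xs ih =>
    cases w' with
    | nil => simp at h
    | cons b ys =>
      have H := ih ys (by simpa using h)
      rw [hammingL_cons]
      fin_cases a <;> fin_cases b <;> simp [List.count_cons] <;> omega

/-! ### Reflected binary Gray code facts -/

lemma binGray_length (m : ℕ) : (binGray m).length = 2 ^ m := by
  induction m with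
  | zero => rfl
  | succ m ih => simp [binGray, ih]; ring

lemma binGray_mem_length (m : ℕ) : ∀ w ∈ binGray m, w.length = m := by
  induction m with
  | zero => intro w hw; simp [binGray] at hw; simp [hw]
  | succ m ih =>
    intro w hw
    simp [binGray] at hw
    rcases hw with ⟨v, hv, rfl⟩ | ⟨v, hv, rfl⟩ <;> simp [ih v hv]

lemma binGray_nodup (m : ℕ) : (binGray m).Nodup := by
  induction m with
  | zero => simp [binGray]
  | succ m ih =>
    simp only [binGray]
    apply List.Nodup.append
    · exact ih.map (fun a b h => by simpa using h)
    · exact (List.nodup_reverse.mpr ih).map (fun a b h => by simpa using h)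
    · intro w hw hw'
      simp at hw hw'
      obtain ⟨v, _, rfl⟩ := hw
      obtain ⟨u, _, h⟩ := hw'
      simp at h

lemma binGray_complete (m : ℕ) : ∀ w : List (Fin 2), w.length = m → w ∈ binGray m := by
  induction m with
  | zero => intro w hw; simp [List.length_eq_zero_iff] at hw; simp [hw, binGray]
  | succ m ih =>
    intro w hw
    cases w with
    | nil => simp at hw
    | cons a v =>
      have hv : v ∈ binGray m := ih v (by simpa using hw)
      simp only [binGray, List.mem_append, List.mem_map, List.mem_reverse]
      fin_cases a
      · exact Or.inl ⟨v, hv, rfl⟩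
      · exact Or.inr ⟨v, hv, rfl⟩

/-- Convenient access to the Gray code terms. -/
def gE (m i : ℕ) : List (Fin 2) := (binGray m).getD i []

lemma gE_eq_getElem (m i : ℕ) (h : i < 2 ^ m) :
    gE m i = (binGray m)[i]'(by rw [binGray_length]; exact h) :=
  List.getD_eq_getElem _ _ (by rw [binGray_length]; exact h)

lemma gE_length (m i : ℕ) (h : i < 2 ^ m) : (gE m i).length = m := by
  rw [gE_eq_getElem m i h]
  exact binGray_mem_length m _ (List.getElem_mem _)

lemma gE_inj (m : ℕ) {i j : ℕ} (hi : i < 2 ^ m) (hj : j < 2 ^ m)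
    (h : gE m i = gE m j) : i = j := by
  rw [gE_eq_getElem m i hi, gE_eq_getElem m j hj] at h
  exact ((binGray_nodup m).getElem_inj_iff).mp h

lemma gE_lo (m i : ℕ) (h : i < 2 ^ m) : gE (m + 1) i = 0 :: gE m i := by
  rw [gE_eq_getElem _ _ (by have := Nat.one_le_two_pow (n := m); rw [pow_succ]; omega),
      gE_eq_getElem _ _ h]
  simp only [binGray]
  rw [List.getElem_append_left (by simpa [binGray_length] using h)]
  simp

lemma gE_hi (m j : ℕ) (h : j < 2 ^ m) :
    gE (m + 1) (2 ^ m + j) = 1 :: gE m (2 ^ m - 1 - j) := by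
  rw [gE_eq_getElem _ _ (by rw [pow_succ]; omega),
      gE_eq_getElem _ _ (by omega)]
  simp only [binGray]
  rw [List.getElem_append_right (by simp [binGray_length])]
  simp [binGray_length, List.getElem_reverse]

lemma gE_zero (m : ℕ) : gE m 0 = List.replicate m 0 := by
  induction m with
  | zero => rfl
  | succ m ih =>
    rw [gE_lo m 0 (Nat.pow_pos (by norm_num)), ih]
    rfl

lemma gE_last (m : ℕ) (h : 1 ≤ m) :
    gE m (2 ^ m - 1) = 1 :: List.replicate (m - 1) 0 := by
  obtain ⟨m, rfl⟩ := Nat.exists_eq_add_of_le h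
  have h2 : (2:ℕ) ^ (1 + m) - 1 = 2 ^ m + (2 ^ m - 1) := by
    have := Nat.one_le_two_pow (n := m); rw [add_comm, pow_succ]; omega
  rw [add_comm] at h2 ⊢
  rw [h2, gE_hi m _ (by have := Nat.one_le_two_pow (n := m); omega)]
  have : 2 ^ m - 1 - (2 ^ m - 1) = 0 := by omega
  rw [this, gE_zero]
  simp

lemma gE_one (m : ℕ) (h : 1 ≤ m) : gE m 1 = List.replicate (m - 1) 0 ++ [1] := by
  induction m with
  | zero => omega
  | succ m ih =>
    rcases Nat.eq_or_lt_of_le h with h1 | h1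
    · simp [← h1]; rfl
    · have hm : 1 ≤ m := by omega
      rw [gE_lo m 1 (by have := Nat.one_lt_two_pow_iff (n := m); omega), ih hm]
      have : m + 1 - 1 = (m - 1) + 1 := by omega
      rw [this, List.replicate_succ]
      simp

lemma gE_pen (m : ℕ) (h : 2 ≤ m) :
    gE m (2 ^ m - 2) = 1 :: (List.replicate (m - 2) 0 ++ [1]) := by
  obtain ⟨m, rfl⟩ := Nat.exists_eq_add_of_le h
  have hm1 : 1 ≤ 2 ^ m := Nat.one_le_two_pow
  have e1 : (2:ℕ) ^ (2 + m) = 2 * 2 ^ (1 + m) := by ring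
  have e2 : (2:ℕ) ^ (1 + m) = 2 * 2 ^ m := by ring
  have h2 : (2:ℕ) ^ (2 + m) - 2 = 2 ^ (1 + m) + (2 ^ (1 + m) - 2) := by omega
  have h3 : 2 + m = (1 + m) + 1 := by omega
  rw [h2, h3, gE_hi (1 + m) _ (by omega)]
  have h4 : 2 ^ (1 + m) - 1 - (2 ^ (1 + m) - 2) = 1 := by omega
  rw [h4, gE_one (1 + m) (by omega)]
  simp

lemma gE_adj (m : ℕ) : ∀ i, i + 1 < 2 ^ m → hammingL (gE m i) (gE m (i + 1)) = 1 := by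
  induction m with
  | zero => intro i hi; simp at hi
  | succ m ih =>
    intro i hi
    rcases lt_trichotomy (i + 1) (2 ^ m) with h | h | h
    · rw [gE_lo m i (by omega), gE_lo m (i + 1) h, hammingL_cons, if_pos rfl, ih i h]
    · have h0 : (2:ℕ) ^ m + 0 = i + 1 := by omega
      rw [gE_lo m i (by omega), ← h0, gE_hi m 0 (by positivity)]
      rw [hammingL_cons, if_neg (by decide)]
      have : 2 ^ m - 1 - 0 = i := by omega
      rw [this, hammingL_self]
    · have hpow : (2:ℕ) ^ (m+1) = 2 * 2 ^ m := by ring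
      obtain ⟨j, rfl⟩ : ∃ j, i = 2 ^ m + j := ⟨i - 2 ^ m, by omega⟩
      have e2 : 2 ^ m + j + 1 = 2 ^ m + (j + 1) := by omega
      rw [e2, gE_hi m j (by omega), gE_hi m (j + 1) (by omega)]
      rw [hammingL_cons, if_pos rfl]
      set s := 2 ^ m - 1 - (j + 1) with hs
      have e3 : 2 ^ m - 1 - j = s + 1 := by omega
      rw [e3, hammingL_comm, ih s (by omega)]

lemma gE_wrap (m : ℕ) (h : 1 ≤ m) : hammingL (gE m (2 ^ m - 1)) (gE m 0) = 1 := by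
  rw [gE_last m h, gE_zero]
  obtain ⟨m, rfl⟩ := Nat.exists_eq_add_of_le h
  rw [add_comm]
  rw [List.replicate_succ, hammingL_cons, if_neg (by decide)]
  simp [hammingL_self]

lemma gE_count (m : ℕ) : ∀ i, i < 2 ^ m → (gE m i).count 1 % 2 = i % 2 := by
  intro i
  induction i with
  | zero => intro _; rw [gE_zero]; simp [List.count_replicate]
  | succ i ih =>
    intro hi
    have H := count_parity (gE m i) (gE m (i + 1))
      (by rw [gE_length m i (by omega), gE_length m (i+1) hi])
    rw [gE_adj m i hi] at H
    have := ih (by omega)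
    omega

/-! ### Surjectivity from injectivity by counting -/

lemma surj_of_inj (L N : ℕ) (f : ℕ → List (Fin 2)) (hN : N = 2 ^ L)
    (hinj : Set.InjOn f (Set.Iio N)) (hlen : ∀ i < N, (f i).length = L) :
    Set.SurjOn f (Set.Iio N) {w : List (Fin 2) | w.length = L} := by
  have hset : {w : List (Fin 2) | w.length = L} = ↑(binGray L).toFinset := by
    ext w
    simp only [Set.mem_setOf_eq, Finset.coe_sort_coe, List.coe_toFinset, Set.mem_setOf_eq,
      Finset.mem_coe, List.mem_toFinset]
    exact ⟨binGray_complete L w, binGray_mem_length L w⟩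
  have himg : f '' (Set.Iio N) ⊆ {w : List (Fin 2) | w.length = L} := by
    rintro _ ⟨i, hi, rfl⟩
    exact hlen i hi
  have hfin : ({w : List (Fin 2) | w.length = L}).Finite := by
    rw [hset]; exact (binGray L).toFinset.finite_toSet
  have hcard1 : (f '' Set.Iio N).ncard = N := by
    rw [Set.ncard_image_of_injOn hinj]
    rw [show (Set.Iio N) = ↑(Finset.Iio N) by simp]
    rw [Set.ncard_coe_finset, Nat.card_Iio]
  have hcard2 : ({w : List (Fin 2) | w.length = L}).ncard = N := by
    rw [hset, Set.ncard_coe_finset, List.toFinset_card_of_nodup (binGray_nodup L),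
      binGray_length, hN]
  have himgeq : f '' Set.Iio N = {w : List (Fin 2) | w.length = L} :=
    Set.eq_of_subset_of_ncard_le himg (by rw [hcard1, hcard2]) hfin
  exact fun w hw => himgeq ▸ hw

/-! ### The inductive invariant -/

/-- The head patterns of the inductive construction. -/
def headFn : Bool → ℕ → List (Fin 2)
  | true, q =>
      if q = 0 then [0, 0] else if q = 1 then [0, 1] else if q = 2 then [1, 1] else [1, 0]
  | false, q =>
      if q = 0 then [1, 0] else if q = 1 then [1, 1] else if q = 2 then [0, 1] else [0, 0]

lemma headFn_length (b : Bool) (q : ℕ) : (headFn b q).length = 2 := by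
  cases b <;> simp only [headFn] <;> split_ifs <;> rfl

lemma grSeq_succ_eq (n0 : ℕ) (b : Bool) (t i : ℕ) :
    grSeq n0 b (t+1) i =
      cplW^[i % 2 ^ (n0 + 2 * t)] (headFn b (i / 2 ^ (n0 + 2 * t))) ++
        grSeq n0 (i / 2 ^ (n0 + 2 * t) % 2 == 0) t (i % 2 ^ (n0 + 2 * t)) := by
  cases b <;> rfl

lemma grSeq_zeroT (n0 i : ℕ) : grSeq n0 true 0 i = gamma1 n0 i := rfl

lemma grSeq_zeroF (n0 i : ℕ) : grSeq n0 false 0 i = rho1 n0 i := rfl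

lemma grSeq_succ' (n0 : ℕ) (b : Bool) (t q r : ℕ) (hr : r < 2 ^ (n0 + 2 * t)) :
    grSeq n0 b (t+1) (2 ^ (n0 + 2 * t) * q + r) =
      cplW^[r] (headFn b q) ++ grSeq n0 (q % 2 == 0) t r := by
  rw [grSeq_succ_eq]
  have h1 : (2 ^ (n0 + 2 * t) * q + r) / 2 ^ (n0 + 2 * t) = q := by
    rw [Nat.mul_add_div (by positivity), Nat.div_eq_of_lt hr, Nat.add_zero]
  have h2 : (2 ^ (n0 + 2 * t) * q + r) % 2 ^ (n0 + 2 * t) = r := by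
    rw [Nat.mul_add_mod, Nat.mod_eq_of_lt hr]
  rw [h1, h2]

lemma gamma1_eq (n0 i : ℕ) :
    gamma1 n0 i = gE n0 (if i = 0 then 0 else 2 ^ n0 - i) := by
  unfold gamma1 gE
  split_ifs <;> rfl

lemma rho1_eq (n0 i : ℕ) :
    rho1 n0 i = gE n0 (if i = 0 then 2 ^ n0 - 1 else i - 1) := by
  unfold rho1 gE
  split_ifs <;> rfl

structure GrayInv (n0 t : ℕ) : Prop where
  len : ∀ b : Bool, ∀ i < 2 ^ (n0 + 2 * t), (grSeq n0 b t i).length = n0 + 2 * t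
  inj : ∀ b : Bool, Set.InjOn (grSeq n0 b t) (Set.Iio (2 ^ (n0 + 2 * t)))
  parT : ∀ i < 2 ^ (n0 + 2 * t), (grSeq n0 true t i).count 1 % 2 = i % 2
  parF : ∀ i < 2 ^ (n0 + 2 * t), (grSeq n0 false t i).count 1 % 2 = (i + 1) % 2
  adj : ∀ b : Bool, ∀ i, 1 ≤ i → i < 2 ^ (n0 + 2 * t) →
    hammingL (grSeq n0 b t (i - 1)) (grSeq n0 b t i) = 2 * t + 1
  wrap : ∀ b : Bool,
    hammingL (grSeq n0 b t (2 ^ (n0 + 2 * t) - 1)) (grSeq n0 b t 0) = 2 * t + 1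
  seam1 : hammingL (grSeq n0 true t (2 ^ (n0 + 2 * t) - 1)) (grSeq n0 false t 0) = 2 * t + 2
  seam2 : hammingL (grSeq n0 false t (2 ^ (n0 + 2 * t) - 1)) (grSeq n0 true t 0) = 2 * t + 2

lemma grayInv_zero (n0 : ℕ) (h2 : 2 ≤ n0) : GrayInv n0 0 := by
  have hE0 : n0 + 2 * 0 = n0 := by ring
  have h4 : (4:ℕ) ≤ 2 ^ n0 := by
    calc (4:ℕ) = 2 ^ 2 := by norm_num
    _ ≤ 2 ^ n0 := Nat.pow_le_pow_right (by norm_num) h2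
  obtain ⟨p, hp⟩ : ∃ p, 2 ^ n0 = 2 * p :=
    ⟨2 ^ (n0 - 1), by rw [← pow_succ']; congr 1; omega⟩
  constructor
  · -- len
    intro b i hi
    rw [hE0] at hi ⊢
    cases b
    · rw [grSeq_zeroF, rho1_eq]
      split_ifs <;> exact gE_length _ _ (by omega)
    · rw [grSeq_zeroT, gamma1_eq]
      split_ifs <;> exact gE_length _ _ (by omega)
  · -- inj
    intro b i hi j hj h
    simp only [Set.mem_Iio, hE0] at hi hj
    cases b
    · rw [grSeq_zeroF, grSeq_zeroF, rho1_eq, rho1_eq] at h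
      have := gE_inj n0 (i := if i = 0 then 2 ^ n0 - 1 else i - 1)
        (j := if j = 0 then 2 ^ n0 - 1 else j - 1)
        (by split_ifs <;> omega) (by split_ifs <;> omega) h
      split_ifs at this <;> omega
    · rw [grSeq_zeroT, grSeq_zeroT, gamma1_eq, gamma1_eq] at h
      have := gE_inj n0 (i := if i = 0 then 0 else 2 ^ n0 - i)
        (j := if j = 0 then 0 else 2 ^ n0 - j)
        (by split_ifs <;> omega) (by split_ifs <;> omega) h
      split_ifs at this <;> omega
  · -- parT
    intro i hi
    rw [hE0] at hi
    rw [grSeq_zeroT, gamma1_eq]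
    have := gE_count n0 (if i = 0 then 0 else 2 ^ n0 - i) (by split_ifs <;> omega)
    split_ifs at this ⊢ <;> omega
  · -- parF
    intro i hi
    rw [hE0] at hi
    rw [grSeq_zeroF, rho1_eq]
    have := gE_count n0 (if i = 0 then 2 ^ n0 - 1 else i - 1) (by split_ifs <;> omega)
    split_ifs at this ⊢ <;> omega
  · -- adj
    intro b i h1 hi
    rw [hE0] at hi
    cases b
    · rw [grSeq_zeroF, grSeq_zeroF, rho1_eq, rho1_eq]
      rcases Nat.eq_or_lt_of_le h1 with h | h
      · rw [if_pos (by omega), if_neg (by omega), ← h]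
        exact gE_wrap n0 (by omega)
      · rw [if_neg (by omega), if_neg (by omega)]
        have e : i - 1 = (i - 1 - 1) + 1 := by omega
        rw [e]
        exact gE_adj n0 (i - 1 - 1) (by omega)
    · rw [grSeq_zeroT, grSeq_zeroT, gamma1_eq, gamma1_eq]
      rcases Nat.eq_or_lt_of_le h1 with h | h
      · rw [if_pos (by omega), if_neg (by omega), ← h, hammingL_comm]
        exact gE_wrap n0 (by omega)
      · rw [if_neg (by omega), if_neg (by omega)]
        have e : 2 ^ n0 - (i - 1) = (2 ^ n0 - i) + 1 := by omega
        rw [e, hammingL_comm]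
        exact gE_adj n0 (2 ^ n0 - i) (by omega)
  · -- wrap
    intro b
    rw [hE0]
    cases b
    · rw [grSeq_zeroF, grSeq_zeroF, rho1_eq, rho1_eq,
        if_neg (by omega), if_pos rfl]
      rw [show (2:ℕ) ^ n0 - 1 - 1 = 2 ^ n0 - 2 from by omega]
      rw [show (2:ℕ) ^ n0 - 1 = (2 ^ n0 - 2) + 1 from by omega]
      exact gE_adj n0 (2 ^ n0 - 2) (by omega)
    · rw [grSeq_zeroT, grSeq_zeroT, gamma1_eq, gamma1_eq,
        if_neg (by omega), if_pos rfl]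
      rw [show (2:ℕ) ^ n0 - (2 ^ n0 - 1) = 0 + 1 from by omega, hammingL_comm]
      exact gE_adj n0 0 (by omega)
  · -- seam1
    rw [hE0, grSeq_zeroT, grSeq_zeroF, gamma1_eq, rho1_eq,
      if_neg (by omega), if_pos rfl]
    rw [show (2:ℕ) ^ n0 - (2 ^ n0 - 1) = 1 from by omega]
    rw [gE_one n0 (by omega), gE_last n0 (by omega)]
    obtain ⟨m, hm⟩ : ∃ m, n0 = m + 2 := ⟨n0 - 2, by omega⟩
    subst hm
    rw [show m + 2 - 1 = m + 1 from rfl]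
    rw [show List.replicate (m+1) (0 : Fin 2) ++ [1] = 0 :: (List.replicate m 0 ++ [1]) from by
      rw [List.replicate_succ]; simp]
    rw [show (1 : Fin 2) :: List.replicate (m+1) (0 : Fin 2)
        = 1 :: (List.replicate m 0 ++ [0]) from by rw [List.replicate_succ']]
    rw [hammingL_cons, if_neg (by decide),
      hammingL_append _ _ _ _ rfl, hammingL_self]
    decide
  · -- seam2
    rw [hE0, grSeq_zeroF, grSeq_zeroT, rho1_eq, gamma1_eq,
      if_neg (by omega), if_pos rfl]
    rw [show (2:ℕ) ^ n0 - 1 - 1 = 2 ^ n0 - 2 from by omega]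
    rw [gE_pen n0 (by omega), gE_zero]
    obtain ⟨m, hm⟩ : ∃ m, n0 = m + 2 := ⟨n0 - 2, by omega⟩
    subst hm
    rw [show m + 2 - 2 = m from rfl]
    rw [show List.replicate (m+2) (0 : Fin 2) = 0 :: (List.replicate m 0 ++ [0]) from by
      rw [List.replicate_succ, List.replicate_succ']]
    rw [hammingL_cons, if_neg (by decide),
      hammingL_append _ _ _ _ rfl, hammingL_self]
    decide


/-! ### The inductive step -/

def eqBits (u : List (Fin 2)) : Prop := u.getD 0 0 = u.getD 1 0

instance (u : List (Fin 2)) : Decidable (eqBits u) := by unfold eqBits; infer_instance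

lemma eqBits_cplW (u : List (Fin 2)) (h : u.length = 2) : eqBits (cplW u) ↔ eqBits u := by
  match u, h with
  | [a, b], _ =>
    have key : ∀ a b : Fin 2, (cpl a = cpl b ↔ a = b) := by decide
    simpa [eqBits, cplW] using key a b

lemma eqBits_iter (r : ℕ) (u : List (Fin 2)) (h : u.length = 2) :
    eqBits (cplW^[r] u) ↔ eqBits u := by
  rw [cplW_iterate]
  split_ifs
  · exact Iff.rfl
  · exact eqBits_cplW u h

lemma eqBits_headFn (b : Bool) (q : ℕ) (hq : q < 4) :
    eqBits (headFn b q) ↔ (q % 2 = if b then 0 else 1) := by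
  interval_cases q <;> cases b <;> decide

lemma headFn_inj (b : Bool) (q q' : ℕ) (hq : q < 4) (hq' : q' < 4)
    (he : headFn b q = headFn b q') : q = q' := by
  cases b <;> interval_cases q <;> interval_cases q' <;>
    first
      | rfl
      | exact absurd he (by decide)

lemma headFn_count (b : Bool) (q r : ℕ) (hq : q < 4) :
    (cplW^[r] (headFn b q)).count 1 % 2 = (q + if b then 0 else 1) % 2 := by
  rw [cplW_iterate]
  rcases Nat.mod_two_eq_zero_or_one r with h | h
  · rw [if_pos h]; interval_cases q <;> cases b <;> decide
  · rw [if_neg (by omega)]; interval_cases q <;> cases b <;> decide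

lemma pow_decomp (M i : ℕ) (hi : i < 4 * 2 ^ M) :
    ∃ q r, q < 4 ∧ r < 2 ^ M ∧ i = 2 ^ M * q + r := by
  have hpos : 0 < 2 ^ M := Nat.pow_pos (by norm_num)
  refine ⟨i / 2 ^ M, i % 2 ^ M, ?_, Nat.mod_lt _ hpos, (Nat.div_add_mod i (2 ^ M)).symm⟩
  exact Nat.div_lt_of_lt_mul (by omega)

lemma grayInv_succ (n0 t : ℕ) (h2 : 2 ≤ n0) (I : GrayInv n0 t) : GrayInv n0 (t + 1) := by
  have hE : n0 + 2 * (t + 1) = (n0 + 2 * t) + 2 := by ring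
  have h4 : (2:ℕ) ^ ((n0 + 2 * t) + 2) = 4 * 2 ^ (n0 + 2 * t) := by ring
  have hM2 : 2 ≤ n0 + 2 * t := by omega
  have h4M : (4:ℕ) ≤ 2 ^ (n0 + 2 * t) := by
    calc (4:ℕ) = 2 ^ 2 := by norm_num
    _ ≤ 2 ^ (n0 + 2 * t) := Nat.pow_le_pow_right (by norm_num) hM2
  obtain ⟨p, hp⟩ : ∃ p, 2 ^ (n0 + 2 * t) = 2 * p :=
    ⟨2 ^ (n0 + 2 * t - 1), by rw [← pow_succ']; congr 1; omega⟩
  have hlast : 2 ^ ((n0 + 2 * t) + 2) - 1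
      = 2 ^ (n0 + 2 * t) * 3 + (2 ^ (n0 + 2 * t) - 1) := by omega
  have hOdd : (2 ^ (n0 + 2 * t) - 1) % 2 = 1 := by omega
  constructor
  · -- len
    intro b i hi
    rw [hE] at hi ⊢
    rw [h4] at hi
    obtain ⟨q, r, hq, hr, rfl⟩ := pow_decomp _ i hi
    rw [grSeq_succ' n0 b t q r hr]
    rw [List.length_append, cplW_iter_length, headFn_length,
      I.len _ r hr]
    omega
  · -- inj
    intro b i hi j hj h
    simp only [Set.mem_Iio, hE, h4] at hi hj
    obtain ⟨qi, ri, hqi, hri, rfl⟩ := pow_decomp _ i hi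
    obtain ⟨qj, rj, hqj, hrj, rfl⟩ := pow_decomp _ j hj
    rw [grSeq_succ' n0 b t qi ri hri, grSeq_succ' n0 b t qj rj hrj] at h
    obtain ⟨He, Te⟩ := List.append_inj h
      (by rw [cplW_iter_length, cplW_iter_length, headFn_length, headFn_length])
    have key : (qi % 2 = if b then 0 else 1) ↔ (qj % 2 = if b then 0 else 1) := by
      rw [← eqBits_headFn b qi hqi, ← eqBits_headFn b qj hqj,
        ← eqBits_iter ri _ (headFn_length b qi), ← eqBits_iter rj _ (headFn_length b qj), He]
    have hmod : qi % 2 = qj % 2 := by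
      cases b <;> norm_num at key <;> omega
    have hbeq : (qi % 2 == 0) = (qj % 2 == 0) := by rw [hmod]
    rw [hbeq] at Te
    have hre : ri = rj := I.inj _ (Set.mem_Iio.mpr hri) (Set.mem_Iio.mpr hrj) Te
    subst hre
    have hhe : headFn b qi = headFn b qj := cplW_inj.iterate ri He
    have hq_eq : qi = qj := headFn_inj b qi qj hqi hqj hhe
    rw [hq_eq]
  · -- parT
    intro i hi
    rw [hE, h4] at hi
    obtain ⟨q, r, hq, hr, rfl⟩ := pow_decomp _ i hi
    rw [grSeq_succ' n0 true t q r hr, List.count_append]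
    have hh := headFn_count true q r hq
    norm_num at hh
    have e2 : 2 ^ (n0 + 2 * t) * q = 2 * (p * q) := by rw [hp]; ring
    rcases Nat.mod_two_eq_zero_or_one q with hq2 | hq2
    · rw [show (q % 2 == 0) = true from by simp [hq2]]
      have ht := I.parT r hr
      rw [e2]
      omega
    · rw [show (q % 2 == 0) = false from by simp [hq2]]
      have ht := I.parF r hr
      rw [e2]
      omega
  · -- parF
    intro i hi
    rw [hE, h4] at hi
    obtain ⟨q, r, hq, hr, rfl⟩ := pow_decomp _ i hi
    rw [grSeq_succ' n0 false t q r hr, List.count_append]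
    have hh := headFn_count false q r hq
    norm_num at hh
    have e2 : 2 ^ (n0 + 2 * t) * q = 2 * (p * q) := by rw [hp]; ring
    rcases Nat.mod_two_eq_zero_or_one q with hq2 | hq2
    · rw [show (q % 2 == 0) = true from by simp [hq2]]
      have ht := I.parT r hr
      rw [e2]
      omega
    · rw [show (q % 2 == 0) = false from by simp [hq2]]
      have ht := I.parF r hr
      rw [e2]
      omega
  · -- adj
    intro b i h1 hi
    rw [hE, h4] at hi
    obtain ⟨q, r, hq, hr, rfl⟩ := pow_decomp _ i hi
    rcases Nat.eq_zero_or_pos r with hr0 | hr1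
    · -- seam between blocks
      subst hr0
      have hq1 : 1 ≤ q := by
        rcases Nat.eq_zero_or_pos q with rfl | h
        · omega
        · exact h
      interval_cases q
      · -- q = 1
        rw [show 2 ^ (n0 + 2 * t) * 1 + 0 - 1
            = 2 ^ (n0 + 2 * t) * 0 + (2 ^ (n0 + 2 * t) - 1) from by omega]
        rw [show 2 ^ (n0 + 2 * t) * 1 + 0
            = 2 ^ (n0 + 2 * t) * 1 + 0 from rfl]
        rw [grSeq_succ' n0 b t 0 _ (by omega), grSeq_succ' n0 b t 1 0 (by omega)]
        rw [hammingL_append _ _ _ _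
          (by rw [cplW_iter_length, cplW_iter_length, headFn_length, headFn_length])]
        rw [cplW_iterate, if_neg (by omega), cplW_iterate, if_pos (by norm_num)]
        have hseam := I.seam1
        rw [show ((0:ℕ) % 2 == 0) = true from by norm_num,
          show ((1:ℕ) % 2 == 0) = false from by norm_num]
        rw [hseam]
        have hhead : hammingL (cplW (headFn b 0)) (headFn b 1) = 1 := by cases b <;> decide
        rw [hhead]
        omega
      · -- q = 2
        rw [show 2 ^ (n0 + 2 * t) * 2 + 0 - 1
            = 2 ^ (n0 + 2 * t) * 1 + (2 ^ (n0 + 2 * t) - 1) from by omega]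
        rw [grSeq_succ' n0 b t 1 _ (by omega), grSeq_succ' n0 b t 2 0 (by omega)]
        rw [hammingL_append _ _ _ _
          (by rw [cplW_iter_length, cplW_iter_length, headFn_length, headFn_length])]
        rw [cplW_iterate, if_neg (by omega), cplW_iterate, if_pos (by norm_num)]
        have hseam := I.seam2
        rw [show ((1:ℕ) % 2 == 0) = false from by norm_num,
          show ((2:ℕ) % 2 == 0) = true from by norm_num]
        rw [hseam]
        have hhead : hammingL (cplW (headFn b 1)) (headFn b 2) = 1 := by cases b <;> decide
        rw [hhead]
        omega
      · -- q = 3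
        rw [show 2 ^ (n0 + 2 * t) * 3 + 0 - 1
            = 2 ^ (n0 + 2 * t) * 2 + (2 ^ (n0 + 2 * t) - 1) from by omega]
        rw [grSeq_succ' n0 b t 2 _ (by omega), grSeq_succ' n0 b t 3 0 (by omega)]
        rw [hammingL_append _ _ _ _
          (by rw [cplW_iter_length, cplW_iter_length, headFn_length, headFn_length])]
        rw [cplW_iterate, if_neg (by omega), cplW_iterate, if_pos (by norm_num)]
        have hseam := I.seam1
        rw [show ((2:ℕ) % 2 == 0) = true from by norm_num,
          show ((3:ℕ) % 2 == 0) = false from by norm_num]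
        rw [hseam]
        have hhead : hammingL (cplW (headFn b 2)) (headFn b 3) = 1 := by cases b <;> decide
        rw [hhead]
        omega
    · -- inside a block
      rw [show 2 ^ (n0 + 2 * t) * q + r - 1 = 2 ^ (n0 + 2 * t) * q + (r - 1) from by omega]
      rw [grSeq_succ' n0 b t q (r - 1) (by omega), grSeq_succ' n0 b t q r hr]
      rw [hammingL_append _ _ _ _
        (by rw [cplW_iter_length, cplW_iter_length])]
      have eIt : cplW^[r] (headFn b q) = cplW (cplW^[r-1] (headFn b q)) := by
        conv_lhs => rw [show r = (r - 1) + 1 from by omega]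
        rw [Function.iterate_succ_apply']
      rw [eIt]
      rw [hammingL_cplW_right, cplW_iter_length, headFn_length]
      have hadj := I.adj (q % 2 == 0) r hr1 hr
      rw [hadj]
      omega
  · -- wrap
    intro b
    rw [hE, h4, show (4:ℕ) * 2 ^ (n0+2*t) - 1
        = 2 ^ (n0 + 2 * t) * 3 + (2 ^ (n0 + 2 * t) - 1) from by omega]
    have hz : grSeq n0 b (t+1) 0 = headFn b 0 ++ grSeq n0 true t 0 := by
      have h := grSeq_succ' n0 b t 0 0 (by positivity)
      simpa using h
    rw [grSeq_succ' n0 b t 3 _ (by omega), hz]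
    rw [hammingL_append _ _ _ _
      (by rw [cplW_iter_length, headFn_length, headFn_length])]
    rw [cplW_iterate, if_neg (by omega)]
    rw [show ((3:ℕ) % 2 == 0) = false from by norm_num]
    rw [I.seam2]
    have hhead : hammingL (cplW (headFn b 3)) (headFn b 0) = 1 := by cases b <;> decide
    rw [hhead]
    omega
  · -- seam1
    rw [hE, h4, show (4:ℕ) * 2 ^ (n0+2*t) - 1
        = 2 ^ (n0 + 2 * t) * 3 + (2 ^ (n0 + 2 * t) - 1) from by omega]
    have hz : grSeq n0 false (t+1) 0 = headFn false 0 ++ grSeq n0 true t 0 := by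
      have h := grSeq_succ' n0 false t 0 0 (by positivity)
      simpa using h
    rw [grSeq_succ' n0 true t 3 _ (by omega), hz]
    rw [hammingL_append _ _ _ _
      (by rw [cplW_iter_length, headFn_length, headFn_length])]
    rw [cplW_iterate, if_neg (by omega)]
    rw [show ((3:ℕ) % 2 == 0) = false from by norm_num]
    rw [I.seam2]
    have hhead : hammingL (cplW (headFn true 3)) (headFn false 0) = 2 := by decide
    rw [hhead]
    omega
  · -- seam2
    rw [hE, h4, show (4:ℕ) * 2 ^ (n0+2*t) - 1
        = 2 ^ (n0 + 2 * t) * 3 + (2 ^ (n0 + 2 * t) - 1) from by omega]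
    have hz : grSeq n0 true (t+1) 0 = headFn true 0 ++ grSeq n0 true t 0 := by
      have h := grSeq_succ' n0 true t 0 0 (by positivity)
      simpa using h
    rw [grSeq_succ' n0 false t 3 _ (by omega), hz]
    rw [hammingL_append _ _ _ _
      (by rw [cplW_iter_length, headFn_length, headFn_length])]
    rw [cplW_iterate, if_neg (by omega)]
    rw [show ((3:ℕ) % 2 == 0) = false from by norm_num]
    rw [I.seam2]
    have hhead : hammingL (cplW (headFn false 3)) (headFn true 0) = 2 := by decide
    rw [hhead]
    omega

lemma grayInv_all (n0 : ℕ) (h2 : 2 ≤ n0) : ∀ t, GrayInv n0 t := by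
  intro t
  induction t with
  | zero => exact grayInv_zero n0 h2
  | succ t ih => exact grayInv_succ n0 t h2 ih


lemma grSeq_surjOn (n0 t : ℕ) (h2 : 2 ≤ n0) (b : Bool) :
    Set.SurjOn (grSeq n0 b t) (Set.Iio (2 ^ (n0 + 2 * t)))
      {w : List (Fin 2) | w.length = n0 + 2 * t} :=
  surj_of_inj _ _ _ rfl ((grayInv_all n0 h2 t).inj b)
    (fun i hi => (grayInv_all n0 h2 t).len b i hi)

/-- Let `k` be a positive even integer and `n ≥ k + 1`. Define, for
`i ∈ [0, 2^{n-1} - 1]`, `γ^{n,k}_{[i]} = θ^i(0)·γ^{n-1,k-1}_{[i]}` and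
`γ̄^{n,k}_{[i]} = θ^i(1)·γ^{n-1,k-1}_{[i]}`, where `γ^{n-1,k-1}` is the `σ_{k-1}`-Gray
cycle over `{0,1}^{n-1}` built for the odd integer `k - 1`. Then `γ^{n,k}` is a
`σ_k`-Gray cycle over `Even_1^n` (the words of length `n` with an even number of `1`s)
and `γ̄^{n,k}` is a `σ_k`-Gray cycle over `Odd_1^n`; in particular each has length
`2^{n-1}`. -/
theorem statement16 (n k : ℕ) (hk : 0 < k) (hke : Even k) (hn : k + 1 ≤ n) :
    IsGrayCycleOn k (2 ^ (n - 1))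
      (fun i => cpl^[i] 0 :: gammaNK (n - 1) (k - 1) i)
      {w : List (Fin 2) | w.length = n ∧ Even (w.count 1)} ∧
    IsGrayCycleOn k (2 ^ (n - 1))
      (fun i => cpl^[i] 1 :: gammaNK (n - 1) (k - 1) i)
      {w : List (Fin 2) | w.length = n ∧ Odd (w.count 1)} := by
  have hkmod : k % 2 = 0 := Nat.even_iff.mp hke
  have hk2 : 2 ≤ k := by omega
  have hn3 : 3 ≤ n := by omega
  have hn02 : 2 ≤ n - 1 + 1 - (k - 1) := by omega
  set n0 := n - 1 + 1 - (k - 1) with hn0def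
  set T := (k - 1) / 2 with hTdef
  have hMT : n0 + 2 * T = n - 1 := by omega
  have hkT : 2 * T + 1 = k - 1 := by omega
  have I := grayInv_all n0 hn02 T
  have hg : ∀ i, gammaNK (n - 1) (k - 1) i = grSeq n0 true T i := fun i => rfl
  have hNpow : (2:ℕ) ^ (n - 1) = 2 ^ (n0 + 2 * T) := by rw [hMT]
  obtain ⟨P, hP⟩ : ∃ P, (2:ℕ) ^ (n - 1) = 2 * P :=
    ⟨2 ^ (n - 2), by rw [← pow_succ']; congr 1; omega⟩
  have hP1 : 1 ≤ P := by
    have : (2:ℕ) ^ (n - 1) ≠ 0 := by positivity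
    omega
  have hNlast : (2 ^ (n - 1) - 1) % 2 = 1 := by omega
  have hlen' : ∀ i < 2 ^ (n - 1), (grSeq n0 true T i).length = n - 1 := by
    intro i hi
    rw [← hMT]
    exact I.len true i (by rw [← hNpow]; exact hi)
  constructor
  · -- even part
    refine ⟨⟨?_, ?_, ?_⟩, ?_, ?_⟩
    · -- MapsTo
      intro i hi
      simp only [Set.mem_Iio] at hi
      simp only [Set.mem_setOf_eq, List.length_cons, hg]
      refine ⟨by rw [hlen' i hi]; omega, ?_⟩
      have hpar := I.parT i (by rw [← hNpow]; exact hi)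
      rw [Nat.even_iff, cpl_iterate]
      rcases Nat.mod_two_eq_zero_or_one i with h | h
      · rw [if_pos h]
        simp only [List.count_cons]
        norm_num
        omega
      · rw [if_neg (by omega), show cpl 0 = 1 from rfl]
        simp only [List.count_cons]
        norm_num
        omega
    · -- InjOn
      intro i hi j hj h
      simp only [Set.mem_Iio] at hi hj
      simp only [List.cons.injEq, hg] at h
      exact I.inj true (Set.mem_Iio.mpr (by rw [← hNpow]; exact hi))
        (Set.mem_Iio.mpr (by rw [← hNpow]; exact hj)) h.2
    · -- SurjOn
      intro w hw
      simp only [Set.mem_setOf_eq] at hw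
      obtain ⟨hlen, hev⟩ := hw
      cases w with
      | nil => simp at hlen; omega
      | cons a v =>
        have hvlen : v.length = n0 + 2 * T := by
          rw [hMT]
          simp at hlen
          omega
        obtain ⟨i, hi, hgi⟩ := grSeq_surjOn n0 T hn02 true hvlen
        simp only [Set.mem_Iio] at hi
        have hpar := I.parT i hi
        rw [hgi] at hpar
        refine ⟨i, Set.mem_Iio.mpr (by rw [hNpow]; exact hi), ?_⟩
        simp only [hg, hgi]
        congr 1
        rw [Nat.even_iff] at hev
        simp only [List.count_cons] at hev
        rw [cpl_iterate]
        fin_cases a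
        · rw [if_pos (by norm_num at hev; omega)]
          rfl
        · rw [if_neg (by norm_num at hev; omega), show cpl 0 = 1 from rfl]
          rfl
    · -- adjacency
      intro i h1 hi
      have hi' : i < 2 ^ (n0 + 2 * T) := by rw [← hNpow]; exact hi
      constructor
      · simp only [List.length_cons, hg, hlen' _ (by omega : i - 1 < 2 ^ (n - 1)),
          hlen' _ hi]
      · simp only [hg]
        rw [hammingL_cons]
        have e : cpl^[i] (0:Fin 2) = cpl (cpl^[i-1] 0) := by
          conv_lhs => rw [show i = (i - 1) + 1 from by omega]
          rw [Function.iterate_succ_apply']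
        rw [e, if_neg (fun hcon => cpl_ne _ hcon.symm)]
        rw [I.adj true i h1 hi', hkT]
        omega
    · -- wrap
      intro _
      constructor
      · simp only [List.length_cons, hg, hlen' _ (by omega : 2 ^ (n-1) - 1 < 2 ^ (n - 1)),
          hlen' _ (by positivity : 0 < 2 ^ (n - 1))]
      · simp only [hg]
        rw [hammingL_cons]
        have e0 : cpl^[0] (0:Fin 2) = 0 := rfl
        have e1 : cpl^[2 ^ (n-1) - 1] (0:Fin 2) = 1 := by
          rw [cpl_iterate, if_neg (by omega)]; rfl
        rw [e0, e1, if_neg (by decide)]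
        have hw := I.wrap true
        rw [← hNpow] at hw
        rw [hw, hkT]
        omega
  · -- odd part
    refine ⟨⟨?_, ?_, ?_⟩, ?_, ?_⟩
    · -- MapsTo
      intro i hi
      simp only [Set.mem_Iio] at hi
      simp only [Set.mem_setOf_eq, List.length_cons, hg]
      refine ⟨by rw [hlen' i hi]; omega, ?_⟩
      have hpar := I.parT i (by rw [← hNpow]; exact hi)
      rw [Nat.odd_iff, cpl_iterate]
      rcases Nat.mod_two_eq_zero_or_one i with h | h
      · rw [if_pos h]
        simp only [List.count_cons]
        norm_num
        omega
      · rw [if_neg (by omega), show cpl 1 = 0 from rfl]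
        simp only [List.count_cons]
        norm_num
        omega
    · -- InjOn
      intro i hi j hj h
      simp only [Set.mem_Iio] at hi hj
      simp only [List.cons.injEq, hg] at h
      exact I.inj true (Set.mem_Iio.mpr (by rw [← hNpow]; exact hi))
        (Set.mem_Iio.mpr (by rw [← hNpow]; exact hj)) h.2
    · -- SurjOn
      intro w hw
      simp only [Set.mem_setOf_eq] at hw
      obtain ⟨hlen, hodd⟩ := hw
      cases w with
      | nil => simp at hlen; omega
      | cons a v =>
        have hvlen : v.length = n0 + 2 * T := by
          rw [hMT]
          simp at hlen
          omega
        obtain ⟨i, hi, hgi⟩ := grSeq_surjOn n0 T hn02 true hvlen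
        simp only [Set.mem_Iio] at hi
        have hpar := I.parT i hi
        rw [hgi] at hpar
        refine ⟨i, Set.mem_Iio.mpr (by rw [hNpow]; exact hi), ?_⟩
        simp only [hg, hgi]
        congr 1
        rw [Nat.odd_iff] at hodd
        simp only [List.count_cons] at hodd
        rw [cpl_iterate]
        fin_cases a
        · rw [if_neg (by norm_num at hodd; omega), show cpl 1 = 0 from rfl]
          rfl
        · rw [if_pos (by norm_num at hodd; omega)]
          rfl
    · -- adjacency
      intro i h1 hi
      have hi' : i < 2 ^ (n0 + 2 * T) := by rw [← hNpow]; exact hi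
      constructor
      · simp only [List.length_cons, hg, hlen' _ (by omega : i - 1 < 2 ^ (n - 1)),
          hlen' _ hi]
      · simp only [hg]
        rw [hammingL_cons]
        have e : cpl^[i] (1:Fin 2) = cpl (cpl^[i-1] 1) := by
          conv_lhs => rw [show i = (i - 1) + 1 from by omega]
          rw [Function.iterate_succ_apply']
        rw [e, if_neg (fun hcon => cpl_ne _ hcon.symm)]
        rw [I.adj true i h1 hi', hkT]
        omega
    · -- wrap
      intro _
      constructor
      · simp only [List.length_cons, hg, hlen' _ (by omega : 2 ^ (n-1) - 1 < 2 ^ (n - 1)),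
          hlen' _ (by positivity : 0 < 2 ^ (n - 1))]
      · simp only [hg]
        rw [hammingL_cons]
        have e0 : cpl^[0] (1:Fin 2) = 1 := rfl
        have e1 : cpl^[2 ^ (n-1) - 1] (1:Fin 2) = 0 := by
          rw [cpl_iterate, if_neg (by omega)]; rfl
        rw [e0, e1, if_neg (by decide)]
        have hw := I.wrap true
        rw [← hNpow] at hw
        rw [hw, hkT]
        omega
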